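/- For all real λ ≠ 0, x, y and natural n, the two-variable Legendre polynomials satisfy P_n(λ x, y) = Σ_{r=0}^n (y^r/r!) (1-λ²)^r λ^(n-2r) ∂_x^r P_{n-r}(x,y). -/

import Mathlib

open Real Finset

noncomputable def legendre2 (n : ℕ) (x y : ℝ) : ℝ :=
  ((-1 : ℝ) ^ n / Real.sqrt Real.pi) *
    ∑ r ∈ Finset.range (n / 2 + 1),
      Real.Gamma ((n : ℝ) - r + 1 / 2) * x ^ (n - 2 * r) * (-y) ^ r /
        ((Nat.factorial (n - 2 * r) : ℝ) * (Nat.factorial r : ℝ))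

/-- coefficient of `x ^ (m - 2*j)` in `legendre2 m x y` -/
noncomputable def lcoef (y : ℝ) (m j : ℕ) : ℝ :=
  (-1 : ℝ) ^ m / Real.sqrt Real.pi *
    (Real.Gamma ((m : ℝ) - j + 1 / 2) * (-y) ^ j /
      ((Nat.factorial (m - 2 * j) : ℝ) * (Nat.factorial j : ℝ)))

lemma legendre2_eq (m : ℕ) (y x : ℝ) :
    legendre2 m x y = ∑ j ∈ Finset.range (m / 2 + 1), lcoef y m j * x ^ (m - 2 * j) := by
  unfold legendre2 lcoef
  rw [Finset.mul_sum]
  exact Finset.sum_congr rfl fun j _ => by ring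

lemma nat_mul_descFactorial (m r : ℕ) :
    m * (m - 1).descFactorial r = m.descFactorial (r + 1) := by
  cases m with
  | zero => simp [Nat.zero_descFactorial_succ]
  | succ k => exact (Nat.succ_descFactorial_succ k r).symm

lemma iterD : ∀ (r N : ℕ) (m : ℕ → ℕ) (c : ℕ → ℝ),
    iteratedDeriv r (fun x : ℝ => ∑ j ∈ Finset.range N, c j * x ^ (m j)) =
      fun x => ∑ j ∈ Finset.range N, c j * ((m j).descFactorial r) * x ^ (m j - r)
  | 0, N, m, c => by
      funext x; simp
  | (r + 1), N, m, c => by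
      rw [iteratedDeriv_succ']
      have hd : deriv (fun x : ℝ => ∑ j ∈ Finset.range N, c j * x ^ (m j)) =
          fun x => ∑ j ∈ Finset.range N, (c j * (m j)) * x ^ (m j - 1) := by
        funext x
        have h : HasDerivAt (fun x : ℝ => ∑ j ∈ Finset.range N, c j * x ^ (m j))
            (∑ j ∈ Finset.range N, c j * ((m j : ℝ) * x ^ (m j - 1))) x :=
          HasDerivAt.fun_sum fun j _ => (hasDerivAt_pow (m j) x).const_mul (c j)
        rw [h.deriv]
        exact Finset.sum_congr rfl fun j _ => by ring
      rw [hd, iterD r N (fun j => m j - 1) (fun j => c j * (m j))]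
      funext x
      refine Finset.sum_congr rfl fun j _ => ?_
      have hc : ((m j : ℝ)) * (((m j - 1).descFactorial r : ℕ) : ℝ)
          = (((m j).descFactorial (r + 1) : ℕ) : ℝ) := by
        rw [← Nat.cast_mul, nat_mul_descFactorial]
      rw [show m j - 1 - r = m j - (r + 1) by omega, ← hc]
      ring

lemma iter_legendre (m : ℕ) (y : ℝ) (r : ℕ) (x : ℝ) :
    iteratedDeriv r (fun s : ℝ => legendre2 m s y) x =
      ∑ j ∈ Finset.range (m / 2 + 1),
        lcoef y m j * ((m - 2 * j).descFactorial r) * x ^ (m - 2 * j - r) := by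
  have h : (fun s : ℝ => legendre2 m s y) =
      fun s => ∑ j ∈ Finset.range (m / 2 + 1), lcoef y m j * s ^ (m - 2 * j) :=
    funext fun s => legendre2_eq m y s
  rw [h, iterD r (m / 2 + 1) (fun j => m - 2 * j) (fun j => lcoef y m j)]

lemma neg_one_pow_sub_real (a b : ℕ) (h : b ≤ a) :
    (-1 : ℝ) ^ (a - b) = (-1) ^ a * (-1) ^ b := by
  have h1 : (-1 : ℝ) ^ (a - b) * (-1) ^ b = (-1) ^ a := by
    rw [← pow_add, Nat.sub_add_cancel h]
  have h2 : ((-1 : ℝ) ^ b) * ((-1) ^ b) = 1 := by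
    rw [← pow_add, ← two_mul, pow_mul]; norm_num
  calc (-1 : ℝ) ^ (a - b) = (-1 : ℝ) ^ (a - b) * (((-1) ^ b) * ((-1) ^ b)) := by
        rw [h2, mul_one]
    _ = ((-1 : ℝ) ^ (a - b) * (-1) ^ b) * (-1) ^ b := by ring
    _ = (-1) ^ a * (-1) ^ b := by rw [h1]

theorem legendre2_scaling (lam x y : ℝ) (hlam : lam ≠ 0) (n : ℕ) :
    legendre2 n (lam * x) y =
      ∑ r ∈ Finset.range (n + 1),
        (y ^ r / (Nat.factorial r : ℝ)) * (1 - lam ^ 2) ^ r *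
          lam ^ ((n : ℤ) - 2 * r) *
          iteratedDeriv r (fun s : ℝ => legendre2 (n - r) s y) x := by
  classical
  set F : ℕ → ℕ → ℝ := fun r j =>
    (y ^ r / (Nat.factorial r : ℝ)) * (1 - lam ^ 2) ^ r * lam ^ ((n : ℤ) - 2 * r) *
      (lcoef y (n - r) j * (((n - r) - 2 * j).descFactorial r) * x ^ ((n - r) - 2 * j - r))
    with hF
  -- rewrite RHS as a double sum
  have hRHS : (∑ r ∈ Finset.range (n + 1),
      (y ^ r / (Nat.factorial r : ℝ)) * (1 - lam ^ 2) ^ r * lam ^ ((n : ℤ) - 2 * r) *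
        iteratedDeriv r (fun s : ℝ => legendre2 (n - r) s y) x) =
      ∑ r ∈ Finset.range (n + 1), ∑ j ∈ Finset.range ((n - r) / 2 + 1), F r j := by
    refine Finset.sum_congr rfl fun r _ => ?_
    rw [iter_legendre (n - r) y r x, Finset.mul_sum]
  rw [hRHS]
  -- convert to a sigma sum
  rw [Finset.sum_sigma']
  -- drop the terms that vanish
  have hfilter :
      (∑ p ∈ (Finset.range (n + 1)).sigma (fun r => Finset.range ((n - r) / 2 + 1)),
          F p.1 p.2) =
      ∑ p ∈ ((Finset.range (n + 1)).sigma
          (fun r => Finset.range ((n - r) / 2 + 1))).filter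
          (fun p => 2 * (p.1 + p.2) ≤ n), F p.1 p.2 := by
    refine (Finset.sum_filter_of_ne fun p hp hne => ?_).symm
    by_contra hc
    apply hne
    rw [Finset.mem_sigma, Finset.mem_range, Finset.mem_range] at hp
    have hlt : (n - p.1) - 2 * p.2 < p.1 := by omega
    rw [hF]
    simp [Nat.descFactorial_of_lt hlt]
  rw [hfilter]
  -- reindex by (r, j) ↦ (r + j, r)
  have hbij :
      (∑ p ∈ ((Finset.range (n + 1)).sigma
          (fun r => Finset.range ((n - r) / 2 + 1))).filter
          (fun p => 2 * (p.1 + p.2) ≤ n), F p.1 p.2) =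
      ∑ q ∈ (Finset.range (n / 2 + 1)).sigma (fun s => Finset.range (s + 1)),
        F q.2 (q.1 - q.2) := by
    refine Finset.sum_nbij' (fun p => ⟨p.1 + p.2, p.1⟩) (fun q => ⟨q.2, q.1 - q.2⟩)
      ?_ ?_ ?_ ?_ ?_
    · intro p hp
      simp only [Finset.mem_filter, Finset.mem_sigma, Finset.mem_range] at hp ⊢
      omega
    · intro q hq
      simp only [Finset.mem_sigma, Finset.mem_range] at hq
      simp only [Finset.mem_filter, Finset.mem_sigma, Finset.mem_range]
      omega
    · intro p hp
      obtain ⟨a, b⟩ := p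
      dsimp only
      rw [show a + b - a = b by omega]
    · intro q hq
      simp only [Finset.mem_sigma, Finset.mem_range] at hq
      obtain ⟨a, b⟩ := q
      simp only at hq
      dsimp only
      rw [show b + (a - b) = a by omega]
    · intro p hp
      obtain ⟨a, b⟩ := p
      dsimp only
      rw [Nat.add_sub_cancel_left]
  rw [hbij, Finset.sum_sigma]
  -- now compare coefficient-wise
  rw [legendre2_eq n y (lam * x)]
  refine Finset.sum_congr rfl fun s hs => ?_
  rw [Finset.mem_range] at hs
  have hs2 : 2 * s ≤ n := by
    have := Nat.div_mul_le_self n 2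
    omega
  set k := n - 2 * s with hk
  have hsqrt : Real.sqrt Real.pi ≠ 0 :=
    ne_of_gt (Real.sqrt_pos.mpr Real.pi_pos)
  -- each term of the inner sum
  have hterm : ∀ r ∈ Finset.range (s + 1),
      F r (s - r) =
      (lcoef y n s * lam ^ k * x ^ k) *
        (((1 : ℝ) - lam ^ 2) ^ r * (lam ^ 2) ^ (s - r) * (s.choose r : ℝ)) := by
    intro r hr
    rw [Finset.mem_range] at hr
    have hr' : r ≤ s := by omega
    have hrn : r ≤ n := by omega
    have h1 : (n - r) - 2 * (s - r) = k + r := by omega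
    have h2 : k + r - r = k := by omega
    have h3 : n - 2 * r = k + 2 * (s - r) := by omega
    have hfack : ((k).factorial : ℝ) ≠ 0 := Nat.cast_ne_zero.mpr (Nat.factorial_ne_zero _)
    have hfacr : ((r).factorial : ℝ) ≠ 0 := Nat.cast_ne_zero.mpr (Nat.factorial_ne_zero _)
    have hfacsr : (((s - r)).factorial : ℝ) ≠ 0 := Nat.cast_ne_zero.mpr (Nat.factorial_ne_zero _)
    have hfacs : ((s).factorial : ℝ) ≠ 0 := Nat.cast_ne_zero.mpr (Nat.factorial_ne_zero _)
    have hfackr : (((k + r)).factorial : ℝ) ≠ 0 := Nat.cast_ne_zero.mpr (Nat.factorial_ne_zero _)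
    have hzpow : lam ^ ((n : ℤ) - 2 * r) = lam ^ (n - 2 * r) := by
      rw [show (n : ℤ) - 2 * r = ((n - 2 * r : ℕ) : ℤ) by omega, zpow_natCast]
    have hGamma : ((n - r : ℕ) : ℝ) - ((s - r : ℕ) : ℝ) + 1 / 2 = (n : ℝ) - s + 1 / 2 := by
      push_cast [hrn, hr']
      ring
    have hdesc' : (((k + r).descFactorial r : ℕ) : ℝ)
        = ((k + r).factorial : ℝ) / (k.factorial : ℝ) := by
      have h := Nat.factorial_mul_descFactorial (show r ≤ k + r by omega)
      rw [h2] at h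
      rw [eq_div_iff hfack]
      norm_cast
      rw [mul_comm]
      exact h
    have hchoose' : ((s.choose r : ℕ) : ℝ)
        = (s.factorial : ℝ) / ((r.factorial : ℝ) * ((s - r).factorial : ℝ)) := by
      have h := Nat.choose_mul_factorial_mul_factorial hr'
      rw [eq_div_iff (mul_ne_zero hfacr hfacsr)]
      norm_cast
      rw [← h]
      ring
    have hny1 : (-y : ℝ) ^ (s - r) = (-1) ^ s * (-1) ^ r * y ^ (s - r) := by
      rw [neg_pow, neg_one_pow_sub_real s r hr']
    have hny2 : (-y : ℝ) ^ s = (-1) ^ s * (y ^ r * y ^ (s - r)) := by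
      rw [neg_pow, ← pow_add, show r + (s - r) = s by omega]
    simp only [hF]
    unfold lcoef
    rw [h1, h2, hGamma, hzpow, h3, ← hk, pow_add, pow_mul,
      neg_one_pow_sub_real n r hrn, hny1, hny2, hdesc', hchoose']
    rcases neg_one_pow_eq_or ℝ r with he | he <;> rw [he] <;> field_simp <;> ring
  rw [Finset.sum_congr rfl hterm, ← Finset.mul_sum]
  have hbinom : (∑ r ∈ Finset.range (s + 1),
      ((1 : ℝ) - lam ^ 2) ^ r * (lam ^ 2) ^ (s - r) * (s.choose r : ℝ)) = 1 := by
    rw [← add_pow]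
    norm_num
  rw [hbinom, mul_one, mul_pow]
  ring
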